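/- arXiv:1709.03092 — 3 statements merged into one kernel-verified Lean document; each statement's English description precedes it below -/
import Mathlib

section
/- For all t ≥ 0, the error function satisfies the two-sided bound (1 − exp(−t²))^{1/2} ≤ erf(t) ≤ (1 − exp(−2t²))^{1/2}. -/
open Real

/-- The error function `erf(t) = (2/√π)·∫₀ᵗ exp(−u²) du`. -/
noncomputable def erf (t : ℝ) : ℝ := (2 / Real.sqrt π) * ∫ u in (0 : ℝ)..t, Real.exp (-u ^ 2)

namespace ErfAux

open Filter MeasureTheory intervalIntegral Set Topology

lemma cont_gauss : Continuous fun u : ℝ => Real.exp (-u ^ 2) := by continuity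

lemma hasDerivAt_erf (t : ℝ) :
    HasDerivAt erf (2 / Real.sqrt π * Real.exp (-t ^ 2)) t := by
  have h : HasDerivAt (fun s => ∫ u in (0 : ℝ)..s, Real.exp (-u ^ 2))
      (Real.exp (-t ^ 2)) t :=
    intervalIntegral.integral_hasDerivAt_right
      (cont_gauss.intervalIntegrable 0 t)
      (cont_gauss.aestronglyMeasurable.stronglyMeasurableAtFilter)
      cont_gauss.continuousAt
  exact h.const_mul (2 / Real.sqrt π)

lemma erf_zero : erf 0 = 0 := by simp [erf]

lemma erf_nonneg {t : ℝ} (ht : 0 ≤ t) : 0 ≤ erf t := by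
  refine mul_nonneg (by positivity) ?_
  exact intervalIntegral.integral_nonneg ht fun u _ => (Real.exp_pos _).le

lemma expsq_tendsto : Tendsto (fun s : ℝ => Real.exp (-s ^ 2)) atTop (𝓝 0) := by
  apply Real.tendsto_exp_atBot.comp
  apply Filter.tendsto_neg_atBot_iff.mpr
  exact tendsto_pow_atTop two_ne_zero

lemma exp2sq_tendsto : Tendsto (fun s : ℝ => Real.exp (-2 * s ^ 2)) atTop (𝓝 0) := by
  apply Real.tendsto_exp_atBot.comp
  have h : Tendsto (fun s : ℝ => s ^ 2) atTop atTop := tendsto_pow_atTop two_ne_zero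
  have := (h.const_mul_atTop (show (0:ℝ) < 2 by norm_num))
  exact (tendsto_neg_atBot_iff.mpr this).congr fun s => by ring

lemma erf_tendsto : Tendsto erf atTop (𝓝 1) := by
  have hint : IntegrableOn (fun u : ℝ => Real.exp (-u ^ 2)) (Ioi 0) := by
    have := (integrableOn_Ioi_exp_neg_mul_sq_iff (b := 1)).mpr one_pos
    simpa using this
  have h := intervalIntegral_tendsto_integral_Ioi 0 hint tendsto_id
  have hval : ∫ u in Ioi (0 : ℝ), Real.exp (-u ^ 2) = Real.sqrt π / 2 := by
    have := integral_gaussian_Ioi 1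
    simpa using this
  rw [hval] at h
  have h2 := h.const_mul (2 / Real.sqrt π)
  have hπ : Real.sqrt π ≠ 0 := by positivity
  have h3 : (2 / Real.sqrt π) * (Real.sqrt π / 2) = 1 := by field_simp
  rw [h3] at h2
  exact h2.congr fun s => rfl

/-- Generic unimodality argument. -/
lemma key (f φ : ℝ → ℝ) (c : ℝ)
    (hf : ∀ t, HasDerivAt f (Real.exp (-t ^ 2) * φ t) t)
    (hφmono : MonotoneOn φ (Icc 0 c)) (hφanti : AntitoneOn φ (Ici c))
    (hφ0 : φ 0 = 0) (hf0 : f 0 = 0) (hflim : Tendsto f atTop (𝓝 0))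
    {t : ℝ} (ht : 0 ≤ t) : 0 ≤ f t := by
  have fdiff : ∀ s, DifferentiableAt ℝ f s := fun s => (hf s).differentiableAt
  have fcont : Continuous f := continuous_iff_continuousAt.mpr fun s => (fdiff s).continuousAt
  have hderiv : ∀ s, deriv f s = Real.exp (-s ^ 2) * φ s := fun s => (hf s).deriv
  have quasi : ∀ x s y : ℝ, 0 ≤ x → x ≤ s → s ≤ y → min (φ x) (φ y) ≤ φ s := by
    intro x s y hx hxs hsy
    rcases le_total s c with h | h
    · exact min_le_of_left_le (hφmono ⟨hx, hxs.trans h⟩ ⟨hx.trans hxs, h⟩ hxs)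
    · exact min_le_of_right_le (hφanti h (h.trans hsy) hsy)
  rcases le_or_gt 0 (φ t) with hφt | hφt
  · have hmono : MonotoneOn f (Icc 0 t) := by
      apply monotoneOn_of_deriv_nonneg (convex_Icc 0 t)
        (Continuous.continuousOn (by continuity))
        (fun s _ => (fdiff s).differentiableWithinAt)
      intro s hs
      rw [interior_Icc] at hs
      rw [hderiv]
      have h1 : min (φ 0) (φ t) ≤ φ s := quasi 0 s t le_rfl hs.1.le hs.2.le
      rw [hφ0, min_eq_left hφt] at h1
      exact mul_nonneg (Real.exp_pos _).le h1
    have := hmono (Set.left_mem_Icc.mpr ht) (Set.right_mem_Icc.mpr ht) ht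
    linarith [hf0]
  · have hneg : ∀ s, t ≤ s → φ s ≤ 0 := by
      intro s hts
      by_contra hpos
      push_neg at hpos
      have h1 := quasi 0 t s le_rfl ht hts
      rw [hφ0, min_eq_left hpos.le] at h1
      linarith
    have hanti : AntitoneOn f (Ici t) := by
      apply antitoneOn_of_deriv_nonpos (convex_Ici t)
        fcont.continuousOn (fun s _ => (fdiff s).differentiableWithinAt)
      intro s hs
      rw [interior_Ici, Set.mem_Ioi] at hs
      rw [hderiv]
      exact mul_nonpos_of_nonneg_of_nonpos (Real.exp_pos _).le (hneg s hs.le)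
    have hev : ∀ᶠ s in atTop, f s ≤ f t := by
      filter_upwards [Filter.eventually_ge_atTop t] with s hs
      exact hanti Set.self_mem_Ici hs hs
    exact le_of_tendsto hflim hev


lemma erf_cont : Continuous erf :=
  continuous_iff_continuousAt.mpr fun s => (hasDerivAt_erf s).differentiableAt.continuousAt

lemma sqrt_pi_mul_self : Real.sqrt π * Real.sqrt π = π := Real.mul_self_sqrt Real.pi_pos.le

lemma hdiv : (4 : ℝ) / Real.sqrt π * (2 / Real.sqrt π) = 8 / π := by
  rw [div_mul_div_comm, sqrt_pi_mul_self]; norm_num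

lemma hasDerivAt_expsq (s : ℝ) :
    HasDerivAt (fun t : ℝ => Real.exp (-t ^ 2)) (Real.exp (-s ^ 2) * -(2 * s)) s := by
  have h1 : HasDerivAt (fun t : ℝ => -t ^ 2) (-(2 * s)) s := by
    exact ((hasDerivAt_pow 2 s).neg).congr_deriv (by norm_num)
  exact h1.exp

/-- φ₁ -/
lemma hasDerivAt_phi1 (s : ℝ) :
    HasDerivAt (fun s => 4 / Real.sqrt π * erf s - 2 * s)
      (8 / π * Real.exp (-s ^ 2) - 2) s := by
  have h := ((hasDerivAt_erf s).const_mul (4 / Real.sqrt π)).sub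
    ((hasDerivAt_id s).const_mul 2)
  refine h.congr_deriv ?_
  rw [← hdiv]; ring

noncomputable def c1 : ℝ := Real.sqrt (Real.log (4 / π))

lemma log4pi_nonneg : 0 ≤ Real.log (4 / π) :=
  Real.log_nonneg ((one_le_div Real.pi_pos).mpr Real.pi_le_four)

lemma c1_nonneg : 0 ≤ c1 := Real.sqrt_nonneg _

lemma c1_sq : c1 ^ 2 = Real.log (4 / π) := Real.sq_sqrt log4pi_nonneg

lemma exp_neg_log4pi : Real.exp (-Real.log (4 / π)) = π / 4 := by
  rw [Real.exp_neg, Real.exp_log (by positivity)]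
  rw [inv_div]

lemma phi1_cont : Continuous fun s => 4 / Real.sqrt π * erf s - 2 * s :=
  (continuous_const.mul erf_cont).sub (continuous_const.mul continuous_id)

lemma phi1_mono : MonotoneOn (fun s => 4 / Real.sqrt π * erf s - 2 * s) (Icc 0 c1) := by
  apply monotoneOn_of_deriv_nonneg (convex_Icc _ _) phi1_cont.continuousOn
    (fun s _ => (hasDerivAt_phi1 s).differentiableAt.differentiableWithinAt)
  intro s hs
  rw [interior_Icc] at hs
  rw [(hasDerivAt_phi1 s).deriv]
  have hsq : s ^ 2 ≤ Real.log (4 / π) := by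
    rw [← c1_sq]; exact pow_le_pow_left₀ hs.1.le hs.2.le 2
  have hexp : π / 4 ≤ Real.exp (-s ^ 2) := by
    rw [← exp_neg_log4pi]; exact Real.exp_le_exp.mpr (by linarith)
  rw [sub_nonneg, div_mul_eq_mul_div, le_div_iff₀ Real.pi_pos]
  nlinarith

lemma phi1_anti : AntitoneOn (fun s => 4 / Real.sqrt π * erf s - 2 * s) (Ici c1) := by
  apply antitoneOn_of_deriv_nonpos (convex_Ici _) phi1_cont.continuousOn
    (fun s _ => (hasDerivAt_phi1 s).differentiableAt.differentiableWithinAt)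
  intro s hs
  rw [interior_Ici, Set.mem_Ioi] at hs
  rw [(hasDerivAt_phi1 s).deriv]
  have hsq : Real.log (4 / π) ≤ s ^ 2 := by
    rw [← c1_sq]; exact pow_le_pow_left₀ c1_nonneg hs.le 2
  have hexp : Real.exp (-s ^ 2) ≤ π / 4 := by
    rw [← exp_neg_log4pi]; exact Real.exp_le_exp.mpr (by linarith)
  rw [sub_nonpos, div_mul_eq_mul_div, div_le_iff₀ Real.pi_pos]
  nlinarith

/-- φ₂ -/
lemma hasDerivAt_phi2 (s : ℝ) :
    HasDerivAt (fun s => 4 * s * Real.exp (-s ^ 2) - 4 / Real.sqrt π * erf s)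
      (Real.exp (-s ^ 2) * (4 - 8 * s ^ 2 - 8 / π)) s := by
  have h := (((hasDerivAt_id s).const_mul 4).mul (hasDerivAt_expsq s)).sub
    ((hasDerivAt_erf s).const_mul (4 / Real.sqrt π))
  refine h.congr_deriv ?_
  simp only [id_eq]
  rw [← hdiv]; ring

noncomputable def c2 : ℝ := Real.sqrt (1 / 2 - 1 / π)

lemma half_sub_nonneg : (0 : ℝ) ≤ 1 / 2 - 1 / π := by
  have h : (1 : ℝ) / π ≤ 1 / 2 :=
    one_div_le_one_div_of_le (by norm_num) Real.two_le_pi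
  linarith

lemma c2_nonneg : 0 ≤ c2 := Real.sqrt_nonneg _

lemma c2_sq : c2 ^ 2 = 1 / 2 - 1 / π := Real.sq_sqrt half_sub_nonneg

lemma phi2_cont : Continuous fun s => 4 * s * Real.exp (-s ^ 2) - 4 / Real.sqrt π * erf s := by
  apply Continuous.sub _ (continuous_const.mul erf_cont)
  exact (continuous_const.mul continuous_id).mul cont_gauss

lemma eight_div_pi : (8 : ℝ) / π = 8 * (1 / π) := by ring

lemma phi2_mono : MonotoneOn (fun s => 4 * s * Real.exp (-s ^ 2) - 4 / Real.sqrt π * erf s)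
    (Icc 0 c2) := by
  apply monotoneOn_of_deriv_nonneg (convex_Icc _ _) phi2_cont.continuousOn
    (fun s _ => (hasDerivAt_phi2 s).differentiableAt.differentiableWithinAt)
  intro s hs
  rw [interior_Icc] at hs
  rw [(hasDerivAt_phi2 s).deriv]
  have hsq : s ^ 2 ≤ 1 / 2 - 1 / π := by
    rw [← c2_sq]; exact pow_le_pow_left₀ hs.1.le hs.2.le 2
  have : (0 : ℝ) ≤ 4 - 8 * s ^ 2 - 8 / π := by rw [eight_div_pi]; linarith
  exact mul_nonneg (Real.exp_pos _).le this

lemma phi2_anti : AntitoneOn (fun s => 4 * s * Real.exp (-s ^ 2) - 4 / Real.sqrt π * erf s)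
    (Ici c2) := by
  apply antitoneOn_of_deriv_nonpos (convex_Ici _) phi2_cont.continuousOn
    (fun s _ => (hasDerivAt_phi2 s).differentiableAt.differentiableWithinAt)
  intro s hs
  rw [interior_Ici, Set.mem_Ioi] at hs
  rw [(hasDerivAt_phi2 s).deriv]
  have hsq : 1 / 2 - 1 / π ≤ s ^ 2 := by
    rw [← c2_sq]; exact pow_le_pow_left₀ c2_nonneg hs.le 2
  have : 4 - 8 * s ^ 2 - 8 / π ≤ 0 := by rw [eight_div_pi]; linarith
  exact mul_nonpos_of_nonneg_of_nonpos (Real.exp_pos _).le this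

lemma g_lower {t : ℝ} (ht : 0 ≤ t) : 0 ≤ erf t ^ 2 - (1 - Real.exp (-t ^ 2)) := by
  apply key _ _ c1 _ phi1_mono phi1_anti (by simp [erf_zero]) (by simp [erf_zero]) _ ht
  · intro s
    have h := ((hasDerivAt_erf s).pow 2).sub ((hasDerivAt_const s (1 : ℝ)).sub (hasDerivAt_expsq s))
    refine h.congr_deriv ?_
    ring
  · have h := (erf_tendsto.pow 2).sub
      ((tendsto_const_nhds : Tendsto (fun _ : ℝ => (1 : ℝ)) atTop (𝓝 1)).sub expsq_tendsto)
    norm_num at h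
    exact h

lemma g_upper {t : ℝ} (ht : 0 ≤ t) : 0 ≤ (1 - Real.exp (-2 * t ^ 2)) - erf t ^ 2 := by
  apply key _ _ c2 _ phi2_mono phi2_anti (by simp [erf_zero]) (by simp [erf_zero]) _ ht
  · intro s
    have hexp2 : HasDerivAt (fun t : ℝ => Real.exp (-2 * t ^ 2))
        (Real.exp (-2 * s ^ 2) * (-2 * (2 * s))) s := by
      have h1 : HasDerivAt (fun t : ℝ => -2 * t ^ 2) (-2 * (2 * s)) s := by
        simpa using (hasDerivAt_pow 2 s).const_mul (-2 : ℝ)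
      exact h1.exp
    have h := ((hasDerivAt_const s (1 : ℝ)).sub hexp2).sub ((hasDerivAt_erf s).pow 2)
    refine h.congr_deriv ?_
    have he : Real.exp (-2 * s ^ 2) = Real.exp (-s ^ 2) * Real.exp (-s ^ 2) := by
      rw [← Real.exp_add]; ring_nf
    rw [he]; ring
  · have h := ((tendsto_const_nhds : Tendsto (fun _ : ℝ => (1 : ℝ)) atTop (𝓝 1)).sub
      exp2sq_tendsto).sub (erf_tendsto.pow 2)
    have h0 : ((1 : ℝ) - 0 - 1 ^ 2) = 0 := by norm_num
    exact h0 ▸ h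

end ErfAux


/-- For all `t ≥ 0`, `(1 − exp(−t²))^{1/2} ≤ erf(t) ≤ (1 − exp(−2t²))^{1/2}`. -/
theorem erf_two_sided_bound (t : ℝ) (ht : 0 ≤ t) :
    Real.sqrt (1 - Real.exp (-t ^ 2)) ≤ erf t ∧
      erf t ≤ Real.sqrt (1 - Real.exp (-2 * t ^ 2)) := by
  have h1 := ErfAux.g_lower ht
  have h2 := ErfAux.g_upper ht
  constructor
  · have h := Real.sqrt_le_sqrt (show 1 - Real.exp (-t ^ 2) ≤ erf t ^ 2 by linarith)
    rwa [Real.sqrt_sq (ErfAux.erf_nonneg ht)] at h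
  · have h := Real.sqrt_le_sqrt (show erf t ^ 2 ≤ 1 - Real.exp (-2 * t ^ 2) by linarith)
    rwa [Real.sqrt_sq (ErfAux.erf_nonneg ht)] at h
end

section
/- Let A be an m×n real matrix, b ∈ ℝᵐ, λ > 0, p ≥ 1, σ > 0, and define H_{p,σ}(x) = ‖Ax − b‖₂² + λ·∑_{k=1}^n φ_σ(x_k)^p for x ∈ ℝⁿ. Then H_{p,σ} is differentiable on ℝⁿ with gradient ∇H_{p,σ}(x) = 2Aᵀ(Ax − b) + λ·p·v(x), where v(x) ∈ ℝⁿ has components v_j(x) = φ_σ(x_j)^{p−1}·erf(x_j/(√2·σ)). -/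
open Real Matrix

/-- The smoothed absolute value `φ_σ(t) = t·erf(t/(√2·σ)) + √(2/π)·σ·exp(−t²/(2σ²))`. -/
noncomputable def phi (σ t : ℝ) : ℝ :=
  t * erf (t / (Real.sqrt 2 * σ)) + Real.sqrt (2 / π) * σ * Real.exp (-t ^ 2 / (2 * σ ^ 2))

lemma erf_hasDerivAt (t : ℝ) :
    HasDerivAt erf ((2 / Real.sqrt π) * Real.exp (-t ^ 2)) t := by
  have h : HasDerivAt (fun s : ℝ => ∫ u in (0 : ℝ)..s, Real.exp (-u ^ 2))
      (Real.exp (-t ^ 2)) t :=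
    ((Continuous.integral_hasStrictDerivAt (by continuity) 0 t).hasDerivAt)
  exact h.const_mul (2 / Real.sqrt π)

lemma mul_erf_nonneg (s : ℝ) : 0 ≤ s * erf s := by
  rcases le_or_gt 0 s with hs | hs
  · have : 0 ≤ ∫ u in (0:ℝ)..s, Real.exp (-u ^ 2) :=
      intervalIntegral.integral_nonneg hs (fun u _ => (Real.exp_pos _).le)
    have h2 : 0 ≤ erf s := by
      unfold erf; positivity
    positivity
  · have : (∫ u in (0:ℝ)..s, Real.exp (-u ^ 2)) ≤ 0 := by
      rw [intervalIntegral.integral_symm]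
      simp only [neg_nonpos]
      exact intervalIntegral.integral_nonneg hs.le (fun u _ => (Real.exp_pos _).le)
    have h2 : erf s ≤ 0 := by
      unfold erf
      have hπ : 0 < Real.sqrt π := Real.sqrt_pos.2 Real.pi_pos
      exact mul_nonpos_of_nonneg_of_nonpos (by positivity) this
    nlinarith

lemma phi_pos {σ : ℝ} (hσ : 0 < σ) (t : ℝ) : 0 < phi σ t := by
  have hc : 0 < Real.sqrt 2 * σ := by positivity
  have h1 : 0 ≤ t * erf (t / (Real.sqrt 2 * σ)) := by
    set s := t / (Real.sqrt 2 * σ) with hs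
    have hmn := mul_erf_nonneg s
    have ht : (Real.sqrt 2 * σ) * s = t := by rw [hs]; field_simp
    calc (0:ℝ) ≤ (Real.sqrt 2 * σ) * (s * erf s) := by positivity
    _ = t * erf s := by rw [← ht]; ring
  have h2 : 0 < Real.sqrt (2 / π) * σ * Real.exp (-t ^ 2 / (2 * σ ^ 2)) := by
    have : 0 < Real.sqrt (2 / π) := Real.sqrt_pos.2 (by positivity)
    positivity
  unfold phi; linarith

lemma phi_hasDerivAt {σ : ℝ} (hσ : 0 < σ) (t : ℝ) :
    HasDerivAt (phi σ) (erf (t / (Real.sqrt 2 * σ))) t := by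
  have hc : (Real.sqrt 2 * σ) ≠ 0 := by positivity
  have h1 : HasDerivAt (fun t : ℝ => t * erf (t / (Real.sqrt 2 * σ)))
      (1 * erf (t / (Real.sqrt 2 * σ)) +
        t * ((2 / Real.sqrt π) * Real.exp (-(t / (Real.sqrt 2 * σ)) ^ 2) * (1 / (Real.sqrt 2 * σ)))) t := by
    have hinner : HasDerivAt (fun t : ℝ => t / (Real.sqrt 2 * σ)) (1 / (Real.sqrt 2 * σ)) t := by
      simpa using (hasDerivAt_id t).div_const (Real.sqrt 2 * σ)
    exact (hasDerivAt_id t).mul ((erf_hasDerivAt _).comp t hinner)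
  have h2 : HasDerivAt (fun t : ℝ => Real.sqrt (2 / π) * σ * Real.exp (-t ^ 2 / (2 * σ ^ 2)))
      (Real.sqrt (2 / π) * σ * (Real.exp (-t ^ 2 / (2 * σ ^ 2)) * (-(2 * t) / (2 * σ ^ 2)))) t := by
    have hinner : HasDerivAt (fun t : ℝ => -t ^ 2 / (2 * σ ^ 2)) (-(2 * t) / (2 * σ ^ 2)) t := by
      have := ((hasDerivAt_pow 2 t).neg).div_const (2 * σ ^ 2)
      simpa using this
    exact (hinner.exp).const_mul _
  have := h1.add h2
  refine this.congr_deriv (Eq.symm ?_)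
  have hsq : (t / (Real.sqrt 2 * σ)) ^ 2 = t ^ 2 / (2 * σ ^ 2) := by
    rw [div_pow, mul_pow, Real.sq_sqrt (by norm_num : (0:ℝ) ≤ 2)]
  have h2π : Real.sqrt (2 / π) = Real.sqrt 2 / Real.sqrt π :=
    Real.sqrt_div (by norm_num) π
  have hπ : (0:ℝ) < Real.sqrt π := Real.sqrt_pos.2 Real.pi_pos
  have hs2 : Real.sqrt 2 * Real.sqrt 2 = 2 := Real.mul_self_sqrt (by norm_num)
  have hs2' : (0:ℝ) < Real.sqrt 2 := by norm_num [Real.sqrt_pos]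
  rw [hsq, h2π]
  field_simp
  linear_combination (t * Real.exp (-(t ^ 2 / (σ ^ 2 * 2)))) *
    Real.sq_sqrt (show (0:ℝ) ≤ 2 by norm_num)

lemma phipow_hasDerivAt {σ p : ℝ} (hσ : 0 < σ) (hp : 1 ≤ p) (t : ℝ) :
    HasDerivAt (fun t => phi σ t ^ p)
      (p * phi σ t ^ (p - 1) * erf (t / (Real.sqrt 2 * σ))) t := by
  have := (phi_hasDerivAt hσ t).rpow_const (p := p) (Or.inl (phi_pos hσ t).ne')
  convert this using 1
  ring

/-- The functional `H_{p,σ}(x) = ‖Ax − b‖₂² + λ·∑ₖ φ_σ(xₖ)^p` is differentiable on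
`ℝⁿ` with gradient `∇H_{p,σ}(x) = 2Aᵀ(Ax − b) + λ·p·v(x)`, where
`v_j(x) = φ_σ(x_j)^{p−1}·erf(x_j/(√2·σ))`. -/
theorem H_gradient {m n : ℕ} (A : Matrix (Fin m) (Fin n) ℝ) (b : Fin m → ℝ)
    (lam p σ : ℝ) (hlam : 0 < lam) (hp : 1 ≤ p) (hσ : 0 < σ)
    (H : (Fin n → ℝ) → ℝ)
    (hH : ∀ x, H x = (∑ i, ((A.mulVec x - b) i) ^ 2) + lam * ∑ k, phi σ (x k) ^ p) :
    Differentiable ℝ H ∧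
    ∀ (x : Fin n → ℝ) (j : Fin n),
      fderiv ℝ H x (Pi.single j 1)
        = 2 * (Aᵀ.mulVec (A.mulVec x - b)) j
          + lam * p * (phi σ (x j) ^ (p - 1) * erf (x j / (Real.sqrt 2 * σ))) := by
  set ℓ : Fin m → ((Fin n → ℝ) →L[ℝ] ℝ) :=
    fun i => ∑ k, A i k • (ContinuousLinearMap.proj k : (Fin n → ℝ) →L[ℝ] ℝ) with hℓdef
  have hℓ : ∀ (i : Fin m) (y : Fin n → ℝ), ℓ i y = A.mulVec y i := by
    intro i y
    simp [hℓdef, Matrix.mulVec, dotProduct]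
  have key : ∀ x : Fin n → ℝ, HasFDerivAt H
      ((∑ i, (2 * (A.mulVec x - b) i) • ℓ i) +
        lam • ∑ k, (p * phi σ (x k) ^ (p - 1) * erf (x k / (Real.sqrt 2 * σ))) •
          (ContinuousLinearMap.proj k : (Fin n → ℝ) →L[ℝ] ℝ)) x := by
    intro x
    have hfun : H = fun x => (∑ i, ((A.mulVec x - b) i) ^ 2) + lam * ∑ k, phi σ (x k) ^ p :=
      funext hH
    rw [hfun]
    have hq : ∀ i : Fin m, HasFDerivAt (fun x : Fin n → ℝ => ((A.mulVec x - b) i) ^ 2)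
        ((2 * (A.mulVec x - b) i) • ℓ i) x := by
      intro i
      have h0 : HasFDerivAt (fun x : Fin n → ℝ => (A.mulVec x - b) i) (ℓ i) x := by
        have heq : (fun x : Fin n → ℝ => (A.mulVec x - b) i) = fun x => ℓ i x - b i := by
          funext y; simp [hℓ]
        rw [heq]
        exact (ℓ i).hasFDerivAt.sub_const (b i)
      have h2 := h0.mul h0
      have heq2 : (fun x : Fin n → ℝ => ((A.mulVec x - b) i) ^ 2)
          = fun x => (A.mulVec x - b) i * (A.mulVec x - b) i := by
        funext y; ring
      rw [heq2, two_mul, add_smul]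
      exact h2
    have hpen : ∀ k : Fin n, HasFDerivAt (fun x : Fin n → ℝ => phi σ (x k) ^ p)
        ((p * phi σ (x k) ^ (p - 1) * erf (x k / (Real.sqrt 2 * σ))) •
          (ContinuousLinearMap.proj k : (Fin n → ℝ) →L[ℝ] ℝ)) x := by
      intro k
      have hproj : HasFDerivAt (fun y : Fin n → ℝ => y k)
          (ContinuousLinearMap.proj k : (Fin n → ℝ) →L[ℝ] ℝ) x :=
        (ContinuousLinearMap.proj k : (Fin n → ℝ) →L[ℝ] ℝ).hasFDerivAt
      exact (phipow_hasDerivAt hσ hp (x k)).comp_hasFDerivAt x hproj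
    exact (HasFDerivAt.fun_sum (fun i _ => hq i)).add
      ((HasFDerivAt.fun_sum (fun k _ => hpen k)).const_mul lam)
  refine ⟨fun x => (key x).differentiableAt, fun x j => ?_⟩
  rw [(key x).fderiv]
  have hval : ∀ i, ℓ i (Pi.single j 1) = A i j := by
    intro i
    simp [hℓdef, Pi.single_apply, mul_ite]
  simp only [ContinuousLinearMap.add_apply, ContinuousLinearMap.coe_sum',
    Finset.sum_apply, ContinuousLinearMap.coe_smul', Pi.smul_apply,
    ContinuousLinearMap.proj_apply, smul_eq_mul, hval]
  have h1 : ∑ i, 2 * (A.mulVec x - b) i * A i j = 2 * (Aᵀ.mulVec (A.mulVec x - b)) j := by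
    rw [Matrix.mulVec, dotProduct, Finset.mul_sum]
    exact Finset.sum_congr rfl (fun i _ => by rw [Matrix.transpose_apply]; ring)
  have h2 : ∑ k, p * phi σ (x k) ^ (p - 1) * erf (x k / (Real.sqrt 2 * σ)) * (Pi.single j 1 : Fin n → ℝ) k
      = p * phi σ (x j) ^ (p - 1) * erf (x j / (Real.sqrt 2 * σ)) := by
    rw [Finset.sum_eq_single j]
    · simp
    · intro k _ hk; simp [Pi.single_apply, hk]
    · simp
  rw [h1, h2]
  ring
end

section
/- Let A be an m×n real matrix, b ∈ ℝᵐ, λ > 0, 1 < l ≤ 2, p ≥ 1, σ > 0, and define H_{l,p,σ}(x) = ∑_{i=1}^m |(Ax − b)_i|^l + λ·∑_{k=1}^n φ_σ(x_k)^p. If x ∈ ℝⁿ is such that every residual r_i = (Ax − b)_i is nonzero, then H_{l,p,σ} is differentiable at x with gradient ∇H_{l,p,σ}(x) = Aᵀ R (Ax − b) + λ·p·v(x), where R is the m×m diagonal matrix with entries R_ii = l·|r_i|^{l−2} and v(x) ∈ ℝⁿ has components v_j(x) = φ_σ(x_j)^{p−1}·erf(x_j/(√2·σ)). -/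
open Real Matrix

lemma erf_nonneg {t : ℝ} (ht : 0 ≤ t) : 0 ≤ erf t := by
  unfold erf
  apply mul_nonneg (by positivity)
  exact intervalIntegral.integral_nonneg ht (fun u _ => (Real.exp_pos _).le)

lemma erf_nonpos {t : ℝ} (ht : t ≤ 0) : erf t ≤ 0 := by
  unfold erf
  rw [intervalIntegral.integral_symm]
  apply mul_nonpos_of_nonneg_of_nonpos (by positivity)
  simp only [neg_nonpos]
  exact intervalIntegral.integral_nonneg ht (fun u _ => (Real.exp_pos _).le)

/-- If every residual `rᵢ = (Ax − b)ᵢ` is nonzero, then the generalized functional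
`H_{l,p,σ}(x) = ∑ᵢ |(Ax − b)ᵢ|^l + λ·∑ₖ φ_σ(xₖ)^p` is differentiable at `x` with
gradient `∇H_{l,p,σ}(x) = Aᵀ R (Ax − b) + λ·p·v(x)`, where `R_ii = l·|rᵢ|^{l−2}`
and `v_j(x) = φ_σ(x_j)^{p−1}·erf(x_j/(√2·σ))`. -/
theorem H_generalized_gradient {m n : ℕ} (A : Matrix (Fin m) (Fin n) ℝ) (b : Fin m → ℝ)
    (lam l p σ : ℝ) (hlam : 0 < lam) (hl1 : 1 < l) (hl2 : l ≤ 2) (hp : 1 ≤ p) (hσ : 0 < σ)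
    (H : (Fin n → ℝ) → ℝ)
    (hH : ∀ y, H y = (∑ i, |(A.mulVec y - b) i| ^ l) + lam * ∑ k, phi σ (y k) ^ p)
    (x : Fin n → ℝ) (hr : ∀ i, (A.mulVec x - b) i ≠ 0) :
    DifferentiableAt ℝ H x ∧
    ∀ j : Fin n,
      fderiv ℝ H x (Pi.single j 1)
        = (Aᵀ.mulVec ((Matrix.diagonal fun i => l * |(A.mulVec x - b) i| ^ (l - 2)).mulVec
              (A.mulVec x - b))) j
          + lam * p * (phi σ (x j) ^ (p - 1) * erf (x j / (Real.sqrt 2 * σ))) := by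
  have hHe : H = fun y => (∑ i, |(A.mulVec y - b) i| ^ l) + lam * ∑ k, phi σ (y k) ^ p :=
    funext hH
  subst hHe
  -- continuous linear maps for the residuals
  set Li : Fin m → ((Fin n → ℝ) →L[ℝ] ℝ) := fun i =>
    LinearMap.toContinuousLinearMap ((LinearMap.proj i).comp A.mulVecLin) with hLidef
  have hLi : ∀ i : Fin m, HasFDerivAt (fun y => (A.mulVec y - b) i) (Li i) x := by
    intro i
    have heq : (fun y => (A.mulVec y - b) i) = fun y => (Li i) y - b i := by
      funext y
      simp [hLidef, Matrix.mulVecLin_apply]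
    rw [heq]
    exact ((Li i).hasFDerivAt).sub_const (b i)
  have hfi : ∀ i : Fin m, HasFDerivAt (fun y => |(A.mulVec y - b) i| ^ l)
      ((l * |(A.mulVec x - b) i| ^ (l - 2) * (A.mulVec x - b) i) • Li i) x :=
    fun i => by have := (hasDerivAt_abs_rpow ((A.mulVec x - b) i) hl1).comp_hasFDerivAt x (hLi i); exact this
  have hgk : ∀ k : Fin n, HasFDerivAt (fun y : Fin n → ℝ => phi σ (y k) ^ p)
      ((p * phi σ (x k) ^ (p - 1) * erf (x k / (Real.sqrt 2 * σ))) •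
        ContinuousLinearMap.proj (R := ℝ) (φ := fun _ : Fin n => ℝ) k) x := by
    intro k
    have hpsi : HasDerivAt (fun t => phi σ t ^ p)
        (p * phi σ (x k) ^ (p - 1) * erf (x k / (Real.sqrt 2 * σ))) (x k) :=
      (Real.hasDerivAt_rpow_const (Or.inl (phi_pos hσ (x k)).ne')).comp (x k)
        (phi_hasDerivAt hσ (x k))
    exact hpsi.comp_hasFDerivAt x (ContinuousLinearMap.proj (R := ℝ) (φ := fun _ : Fin n => ℝ) k).hasFDerivAt
  have hsum : HasFDerivAt
      (fun y => (∑ i, |(A.mulVec y - b) i| ^ l) + lam * ∑ k, phi σ (y k) ^ p)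
      ((∑ i, (l * |(A.mulVec x - b) i| ^ (l - 2) * (A.mulVec x - b) i) • Li i) +
        lam • (∑ k, (p * phi σ (x k) ^ (p - 1) * erf (x k / (Real.sqrt 2 * σ))) •
          ContinuousLinearMap.proj (R := ℝ) (φ := fun _ : Fin n => ℝ) k)) x :=
    (HasFDerivAt.fun_sum fun i _ => hfi i).add
      ((HasFDerivAt.fun_sum fun k _ => hgk k).const_mul lam)
  refine ⟨hsum.differentiableAt, fun j => ?_⟩
  rw [hsum.fderiv]
  have hRHS : (Aᵀ.mulVec ((Matrix.diagonal fun i => l * |(A.mulVec x - b) i| ^ (l - 2)).mulVec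
        (A.mulVec x - b))) j
      = ∑ i, A i j * (l * |(A.mulVec x - b) i| ^ (l - 2) * (A.mulVec x - b) i) := by
    simp [Matrix.mulVec, dotProduct, Matrix.diagonal_apply, Matrix.transpose_apply,
      ite_mul, zero_mul, Finset.sum_ite_eq]
  rw [hRHS]
  have hLHS : ∀ i : Fin m, (Li i) (Pi.single j 1) = A i j := by
    intro i
    simp [hLidef, Matrix.mulVecLin_apply, Matrix.mulVec_single]
  simp only [ContinuousLinearMap.add_apply, ContinuousLinearMap.coe_sum', Finset.sum_apply,
    ContinuousLinearMap.smul_apply, ContinuousLinearMap.coe_smul', Pi.smul_apply,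
    ContinuousLinearMap.proj_apply, hLHS, smul_eq_mul, Pi.single_apply, mul_ite, mul_one,
    mul_zero, Finset.sum_ite_eq', Finset.mem_univ, if_true]
  rw [Finset.sum_congr rfl fun i _ =>
    mul_comm (l * |(A.mulVec x - b) i| ^ (l - 2) * (A.mulVec x - b) i) (A i j)]
  ring
end
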